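/- Let X be a real Banach space such that every very smooth point of X is a Fréchet smooth point of X, and let J ⊆ X be an M-ideal. Then every very smooth point of J is a Fréchet smooth point of J. -/

import Mathlib

open Filter Topology Metric Set NormedSpace MeasureTheory

noncomputable section

/-- The norm of `X` is Fréchet differentiable at `x`: there is a continuous linear
functional `f` with `lim_{y→0} (‖x+y‖ - ‖x‖ - f y)/‖y‖ = 0`. -/
def FrechetSmoothPoint (X : Type*) [NormedAddCommGroup X] [NormedSpace ℝ X] (x : X) : Prop :=
  ∃ f : X →L[ℝ] ℝ,
    Tendsto (fun y : X => (‖x + y‖ - ‖x‖ - f y) / ‖y‖) (𝓝[≠] (0 : X)) (𝓝 0)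

/-- `x` is a smooth point: it is nonzero and there is exactly one norm-one functional
attaining the norm at `x`. -/
def SmoothPoint (X : Type*) [NormedAddCommGroup X] [NormedSpace ℝ X] (x : X) : Prop :=
  x ≠ 0 ∧ ∃! f : StrongDual ℝ X, ‖f‖ = 1 ∧ f x = ‖x‖

/-- `x` is a very smooth point: it is a smooth point whose canonical image in the bidual
is a smooth point of the bidual. -/
def VerySmoothPoint (X : Type*) [NormedAddCommGroup X] [NormedSpace ℝ X] (x : X) : Prop :=
  SmoothPoint X x ∧ SmoothPoint (StrongDual ℝ (StrongDual ℝ X)) (inclusionInDoubleDual ℝ X x)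

/-- `X = M ⊕_∞ N`: `M, N` are closed subspaces with trivial intersection whose sum is
everything, and `‖m + n‖ = max ‖m‖ ‖n‖` for `m ∈ M`, `n ∈ N`. -/
def MSumDecomp {X : Type*} [NormedAddCommGroup X] [NormedSpace ℝ X]
    (M N : Submodule ℝ X) : Prop :=
  IsClosed (M : Set X) ∧ IsClosed (N : Set X) ∧ M ⊓ N = ⊥ ∧ M ⊔ N = ⊤ ∧
    ∀ m ∈ M, ∀ n ∈ N, ‖m + n‖ = max ‖m‖ ‖n‖

/-- `X = M ⊕₁ N`: `M, N` are closed subspaces with trivial intersection whose sum is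
everything, and `‖m + n‖ = ‖m‖ + ‖n‖` for `m ∈ M`, `n ∈ N`; such `M` is an L-summand. -/
def LSumDecomp {X : Type*} [NormedAddCommGroup X] [NormedSpace ℝ X]
    (M N : Submodule ℝ X) : Prop :=
  IsClosed (M : Set X) ∧ IsClosed (N : Set X) ∧ M ⊓ N = ⊥ ∧ M ⊔ N = ⊤ ∧
    ∀ m ∈ M, ∀ n ∈ N, ‖m + n‖ = ‖m‖ + ‖n‖

/-- The state space `S_x` of a vector `x`. -/
def StateSpace {X : Type*} [NormedAddCommGroup X] [NormedSpace ℝ X] (x : X) :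
    Set (StrongDual ℝ X) :=
  {f : StrongDual ℝ X | ‖f‖ ≤ 1 ∧ f x = 1}

/-- `x` is a quasi-polyhedral (QP) point: for some `δ > 0`, every norm-one `z` with
`‖z - x‖ < δ` has `S_z ⊆ S_x`. -/
def QPPoint (X : Type*) [NormedAddCommGroup X] [NormedSpace ℝ X] (x : X) : Prop :=
  ∃ δ > (0 : ℝ), ∀ z : X, ‖z‖ = 1 → ‖z - x‖ < δ → StateSpace z ⊆ StateSpace x

/-- `X` is an `L¹`-predual space: `X*` is isometrically isomorphic to `L¹(μ)` for some
(positive) measure `μ`. -/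
def IsL1Predual (X : Type*) [NormedAddCommGroup X] [NormedSpace ℝ X] : Prop :=
  ∃ (α : Type) (_ : MeasurableSpace α) (μ : Measure α),
    Nonempty (StrongDual ℝ X ≃ₗᵢ[ℝ] Lp ℝ 1 μ)

/-- The annihilator of a subspace `J ⊆ X` in the continuous dual `X*`. -/
def annihilator' {X : Type*} [NormedAddCommGroup X] [NormedSpace ℝ X]
    (J : Submodule ℝ X) : Submodule ℝ (StrongDual ℝ X) where
  carrier := {f : StrongDual ℝ X | ∀ x ∈ J, f x = 0}
  add_mem' := fun hf hg x hx => by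
    simp only [ContinuousLinearMap.add_apply, hf x hx, hg x hx, add_zero]
  zero_mem' := fun x _ => rfl
  smul_mem' := fun c f hf x hx => by
    simp only [ContinuousLinearMap.coe_smul', Pi.smul_apply, hf x hx, smul_zero]

/-- `J` is an M-ideal in `X`: `J` is closed and `J^⊥` is an L-summand of `X*`. -/
def IsMIdeal {X : Type*} [NormedAddCommGroup X] [NormedSpace ℝ X]
    (J : Submodule ℝ X) : Prop :=
  IsClosed (J : Set X) ∧
    ∃ N : Submodule ℝ (StrongDual ℝ X), LSumDecomp (annihilator' J) N




lemma smooth_transfer {Z Y : Type*} [NormedAddCommGroup Z] [NormedSpace ℝ Z]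
    [NormedAddCommGroup Y] [NormedSpace ℝ Y]
    (T : Z →L[ℝ] Y) (hT : ∀ z, ‖T z‖ = ‖z‖)
    (E : StrongDual ℝ Z → StrongDual ℝ Y)
    (hE1 : ∀ g z, E g (T z) = g z)
    (hE2 : ∀ g, ‖E g‖ ≤ ‖g‖)
    (hE3 : ∀ f : StrongDual ℝ Y, ‖f‖ ≤ ‖f.comp T‖ → f = E (f.comp T))
    {z : Z} (hz : SmoothPoint Z z) : SmoothPoint Y (T z) := by
  obtain ⟨hz0, g₀, ⟨hg₀n, hg₀z⟩, hg₀u⟩ := hz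
  have hzpos : (0:ℝ) < ‖z‖ := norm_pos_iff.mpr hz0
  have hTz0 : T z ≠ 0 := by
    intro h
    rw [← norm_pos_iff] at hz0
    rw [← hT z, h, norm_zero] at hzpos; exact lt_irrefl _ hzpos
  refine ⟨hTz0, E g₀, ⟨?_, ?_⟩, ?_⟩
  · -- norm of E g₀ is 1
    have h1 : ‖E g₀‖ ≤ 1 := by simpa [hg₀n] using hE2 g₀
    have h2 : (1:ℝ) ≤ ‖E g₀‖ := by
      have := (E g₀).le_opNorm (T z)
      rw [hE1, hg₀z, hT, Real.norm_of_nonneg hzpos.le] at this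
      nlinarith
    linarith
  · rw [hE1, hg₀z, hT]
  · rintro f ⟨hfn, hfz⟩
    set g := f.comp T with hg
    have hgz : g z = ‖z‖ := by rw [hg]; simpa [hT] using hfz
    have hgn_le : ‖g‖ ≤ 1 := by
      refine ContinuousLinearMap.opNorm_le_bound _ zero_le_one fun x => ?_
      calc ‖g x‖ = ‖f (T x)‖ := rfl
        _ ≤ ‖f‖ * ‖T x‖ := f.le_opNorm _
        _ = 1 * ‖x‖ := by rw [hfn, hT]
    have hgn_ge : (1:ℝ) ≤ ‖g‖ := by
      have := g.le_opNorm z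
      rw [hgz] at this
      have : ‖z‖ ≤ ‖g‖ * ‖z‖ := by
        calc ‖z‖ = ‖(‖z‖ : ℝ)‖ := by rw [Real.norm_eq_abs, abs_of_pos hzpos]
          _ = ‖g z‖ := by rw [hgz]
          _ ≤ ‖g‖ * ‖z‖ := g.le_opNorm z
      exact le_of_mul_le_mul_right (by linarith) hzpos
    have hfg : f = E g := hE3 f (by rw [hfn]; exact hgn_ge)
    have : g = g₀ := hg₀u g ⟨le_antisymm hgn_le hgn_ge, hgz⟩
    rw [hfg, this]


section DualInst
variable {X : Type*} [NormedAddCommGroup X] [NormedSpace ℝ X]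

instance instDualSubNACG (J : Submodule ℝ X) : NormedAddCommGroup (StrongDual ℝ J) :=
  ContinuousLinearMap.toNormedAddCommGroup (𝕜 := ℝ) (𝕜₂ := ℝ) (E := J) (F := ℝ) (σ₁₂ := RingHom.id ℝ)
instance instDualSubNS (J : Submodule ℝ X) : NormedSpace ℝ (StrongDual ℝ J) :=
  ContinuousLinearMap.toNormedSpace (𝕜 := ℝ) (𝕜₂ := ℝ) (E := J) (F := ℝ) (σ₁₂ := RingHom.id ℝ) (𝕜' := ℝ)
instance instBidualSubNACG (J : Submodule ℝ X) : NormedAddCommGroup (StrongDual ℝ (StrongDual ℝ J)) :=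
  ContinuousLinearMap.toNormedAddCommGroup (𝕜 := ℝ) (𝕜₂ := ℝ) (E := StrongDual ℝ J) (F := ℝ) (σ₁₂ := RingHom.id ℝ)
instance instBidualSubNS (J : Submodule ℝ X) : NormedSpace ℝ (StrongDual ℝ (StrongDual ℝ J)) :=
  ContinuousLinearMap.toNormedSpace (𝕜 := ℝ) (𝕜₂ := ℝ) (E := StrongDual ℝ J) (F := ℝ) (σ₁₂ := RingHom.id ℝ) (𝕜' := ℝ)
instance instBidualXNACG : NormedAddCommGroup (StrongDual ℝ (StrongDual ℝ X)) :=
  ContinuousLinearMap.toNormedAddCommGroup (𝕜 := ℝ) (𝕜₂ := ℝ) (E := StrongDual ℝ X) (F := ℝ) (σ₁₂ := RingHom.id ℝ)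
instance instBidualXNS : NormedSpace ℝ (StrongDual ℝ (StrongDual ℝ X)) :=
  ContinuousLinearMap.toNormedSpace (𝕜 := ℝ) (𝕜₂ := ℝ) (E := StrongDual ℝ X) (F := ℝ) (σ₁₂ := RingHom.id ℝ) (𝕜' := ℝ)
instance instTridualXNACG : NormedAddCommGroup (StrongDual ℝ (StrongDual ℝ (StrongDual ℝ X))) :=
  ContinuousLinearMap.toNormedAddCommGroup (𝕜 := ℝ) (𝕜₂ := ℝ) (E := StrongDual ℝ (StrongDual ℝ X)) (F := ℝ) (σ₁₂ := RingHom.id ℝ)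
instance instTridualXNS : NormedSpace ℝ (StrongDual ℝ (StrongDual ℝ (StrongDual ℝ X))) :=
  ContinuousLinearMap.toNormedSpace (𝕜 := ℝ) (𝕜₂ := ℝ) (E := StrongDual ℝ (StrongDual ℝ X)) (F := ℝ) (σ₁₂ := RingHom.id ℝ) (𝕜' := ℝ)

end DualInst

section MIdeal
variable {X : Type*} [NormedAddCommGroup X] [NormedSpace ℝ X]
  {J : Submodule ℝ X} {N : Submodule ℝ (StrongDual ℝ X)}

lemma LSum_isCompl (h : LSumDecomp (annihilator' J) N) : IsCompl (annihilator' J) N :=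
  ⟨disjoint_iff.mpr h.2.2.1, codisjoint_iff.mpr h.2.2.2.1⟩

def piP (h : LSumDecomp (annihilator' J) N) : StrongDual ℝ X →ₗ[ℝ] StrongDual ℝ X :=
  (annihilator' J).subtype.comp ((annihilator' J).projectionOnto N (LSum_isCompl h))

def piN (h : LSumDecomp (annihilator' J) N) : StrongDual ℝ X →ₗ[ℝ] StrongDual ℝ X :=
  N.subtype.comp (N.projectionOnto (annihilator' J) (LSum_isCompl h).symm)

lemma piP_mem (h : LSumDecomp (annihilator' J) N) (f : StrongDual ℝ X) :
    piP h f ∈ annihilator' J := Submodule.coe_mem _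

lemma piN_mem (h : LSumDecomp (annihilator' J) N) (f : StrongDual ℝ X) :
    piN h f ∈ N := Submodule.coe_mem _

lemma pi_add (h : LSumDecomp (annihilator' J) N) (f : StrongDual ℝ X) :
    piP h f + piN h f = f :=
  Submodule.projection_add_projection_eq_self (LSum_isCompl h) f

lemma pi_norm (h : LSumDecomp (annihilator' J) N) (f : StrongDual ℝ X) :
    ‖f‖ = ‖piP h f‖ + ‖piN h f‖ := by
  conv_lhs => rw [← pi_add h f]
  exact h.2.2.2.2 _ (piP_mem h f) _ (piN_mem h f)

lemma piN_of_mem (h : LSumDecomp (annihilator' J) N) {n : StrongDual ℝ X} (hn : n ∈ N) :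
    piN h n = n := by
  have := Submodule.projectionOnto_apply_left (LSum_isCompl h).symm ⟨n, hn⟩
  simpa [piN] using congrArg (Subtype.val) this

lemma piP_vanish (h : LSumDecomp (annihilator' J) N) (f : StrongDual ℝ X) {x : X} (hx : x ∈ J) :
    piP h f x = 0 := piP_mem h f x hx

lemma piN_apply_coe (h : LSumDecomp (annihilator' J) N) (f : StrongDual ℝ X) (x : J) :
    piN h f x = f x := by
  conv_rhs => rw [← pi_add h f]
  simp [piP_vanish h f x.2]

end MIdeal
section MIdeal2
variable {X : Type*} [NormedAddCommGroup X] [NormedSpace ℝ X]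
  {J : Submodule ℝ X} {N : Submodule ℝ (StrongDual ℝ X)}

/-- The unique norm-preserving extension operator into `N`. -/
def E1 (h : LSumDecomp (annihilator' J) N) (g : StrongDual ℝ J) : StrongDual ℝ X :=
  piN h (exists_extension_norm_eq J g).choose

lemma E1_mem (h : LSumDecomp (annihilator' J) N) (g : StrongDual ℝ J) : E1 h g ∈ N :=
  piN_mem h _

lemma E1_apply (h : LSumDecomp (annihilator' J) N) (g : StrongDual ℝ J) (x : J) :
    E1 h g x = g x := by
  have hs := (exists_extension_norm_eq J g).choose_spec
  rw [E1, piN_apply_coe h _ x, hs.1 x]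

lemma E1_norm_le (h : LSumDecomp (annihilator' J) N) (g : StrongDual ℝ J) : ‖E1 h g‖ ≤ ‖g‖ := by
  have hs := (exists_extension_norm_eq J g).choose_spec
  have := pi_norm h (exists_extension_norm_eq J g).choose
  rw [hs.2] at this
  have h0 := norm_nonneg (piP h (exists_extension_norm_eq J g).choose)
  rw [E1]; linarith

lemma E1_norm_ge (h : LSumDecomp (annihilator' J) N) (g : StrongDual ℝ J) : ‖g‖ ≤ ‖E1 h g‖ := by
  refine ContinuousLinearMap.opNorm_le_bound _ (norm_nonneg _) fun x => ?_
  rw [← E1_apply h g x]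
  exact (E1 h g).le_opNorm x

lemma E1_unique (h : LSumDecomp (annihilator' J) N) {g : StrongDual ℝ J} {f : StrongDual ℝ X}
    (hfN : f ∈ N) (hf : ∀ x : J, f x = g x) : f = E1 h g := by
  have hmem : f - E1 h g ∈ annihilator' J ⊓ N := by
    refine ⟨fun x hx => ?_, Submodule.sub_mem N hfN (E1_mem h g)⟩
    have : f x - E1 h g x = 0 := by rw [hf ⟨x, hx⟩, E1_apply h g ⟨x, hx⟩, sub_self]
    simpa using this
  rw [h.2.2.1, Submodule.mem_bot] at hmem
  exact sub_eq_zero.mp hmem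

/-- `E1` as a continuous linear map. -/
def E1L (h : LSumDecomp (annihilator' J) N) : StrongDual ℝ J →L[ℝ] StrongDual ℝ X :=
  LinearMap.mkContinuous
    { toFun := E1 h
      map_add' := fun g g' =>
        (E1_unique h (Submodule.add_mem N (E1_mem h g) (E1_mem h g'))
          (fun x => by simp [E1_apply])).symm
      map_smul' := fun c g =>
        (E1_unique h (Submodule.smul_mem N c (E1_mem h g))
          (fun x => by simp [E1_apply])).symm }
    1 (fun g => by simpa using E1_norm_le h g)

lemma E1L_apply (h : LSumDecomp (annihilator' J) N) (g : StrongDual ℝ J) : E1L h g = E1 h g := rfl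

/-- Restriction of the `N`-component to `J`. -/
def SL (h : LSumDecomp (annihilator' J) N) : StrongDual ℝ X →L[ℝ] StrongDual ℝ J :=
  LinearMap.mkContinuous
    { toFun := fun f => (piN h f).comp J.subtypeL
      map_add' := fun f f' => by ext x; simp [map_add]
      map_smul' := fun c f => by ext x; simp [_root_.map_smul] }
    1 (fun f => by
      refine ContinuousLinearMap.opNorm_le_bound _ (by norm_num) fun x => ?_
      have h1 : ‖piN h f x‖ ≤ ‖piN h f‖ * ‖x‖ := (piN h f).le_opNorm x
      have h2 : ‖piN h f‖ ≤ ‖f‖ := by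
        have := pi_norm h f
        have h0 := norm_nonneg (piP h f)
        linarith
      calc ‖((piN h f).comp J.subtypeL) x‖ = ‖piN h f x‖ := rfl
        _ ≤ ‖piN h f‖ * ‖x‖ := h1
        _ ≤ 1 * ‖f‖ * ‖x‖ := by nlinarith [norm_nonneg x]
        _ = 1 * ‖f‖ * ‖x‖ := rfl)

lemma SL_apply (h : LSumDecomp (annihilator' J) N) (f : StrongDual ℝ X) (x : J) :
    SL h f x = piN h f x := rfl

lemma SL_E1L (h : LSumDecomp (annihilator' J) N) (g : StrongDual ℝ J) : SL h (E1L h g) = g := by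
  ext x
  rw [SL_apply, E1L_apply, piN_of_mem h (E1_mem h g), E1_apply]

lemma E1_SL (h : LSumDecomp (annihilator' J) N) (f : StrongDual ℝ X) :
    E1 h (SL h f) = piN h f :=
  (E1_unique h (piN_mem h f) (fun _ => rfl)).symm

end MIdeal2
section MIdeal3
variable {X : Type*} [NormedAddCommGroup X] [NormedSpace ℝ X]
  {J : Submodule ℝ X} {N : Submodule ℝ (StrongDual ℝ X)}
/-- Restriction operator between biduals. -/
def PsiL (h : LSumDecomp (annihilator' J) N) :
    StrongDual ℝ (StrongDual ℝ X) →L[ℝ] StrongDual ℝ (StrongDual ℝ J) :=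
  LinearMap.mkContinuous (E := StrongDual ℝ (StrongDual ℝ X)) (F := StrongDual ℝ (StrongDual ℝ J))
    { toFun := fun F => F.comp (E1L h)
      map_add' := fun F F' => by ext g; simp
      map_smul' := fun c F => by ext g; simp }
    1 (fun F => by
      refine ContinuousLinearMap.opNorm_le_bound _ (by positivity) fun g => ?_
      calc ‖(F.comp (E1L h)) g‖ = ‖F (E1L h g)‖ := rfl
        _ ≤ ‖F‖ * ‖E1 h g‖ := F.le_opNorm _
        _ ≤ ‖F‖ * ‖g‖ :=
            mul_le_mul_of_nonneg_left (E1_norm_le h g) (norm_nonneg F)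
        _ = 1 * ‖F‖ * ‖g‖ := by ring)

/-- Embedding of the bidual of `J` into the bidual of `X`. -/
def T2 (h : LSumDecomp (annihilator' J) N) :
    StrongDual ℝ (StrongDual ℝ J) →L[ℝ] StrongDual ℝ (StrongDual ℝ X) :=
  LinearMap.mkContinuous (E := StrongDual ℝ (StrongDual ℝ J)) (F := StrongDual ℝ (StrongDual ℝ X))
    { toFun := fun G => G.comp (SL h)
      map_add' := fun F F' => by ext g; simp
      map_smul' := fun c F => by ext g; simp }
    1 (fun G => by
      refine ContinuousLinearMap.opNorm_le_bound _ (by positivity) fun f => ?_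
      calc ‖(G.comp (SL h)) f‖ = ‖G (SL h f)‖ := rfl
        _ ≤ ‖G‖ * ‖SL h f‖ := G.le_opNorm _
        _ ≤ ‖G‖ * (1 * ‖f‖) := by
            have h2 : ‖SL h‖ ≤ 1 := LinearMap.mkContinuous_norm_le _ zero_le_one _
            have h3 : ‖SL h f‖ ≤ 1 * ‖f‖ := by
              have := (SL h).le_opNorm f
              nlinarith [norm_nonneg f]
            exact mul_le_mul_of_nonneg_left h3 (norm_nonneg G)
        _ = 1 * ‖G‖ * ‖f‖ := by ring)

lemma T2_apply (h : LSumDecomp (annihilator' J) N) (G : StrongDual ℝ (StrongDual ℝ J)) (f : StrongDual ℝ X) :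
    T2 h G f = G (SL h f) := rfl

lemma PsiL_apply (h : LSumDecomp (annihilator' J) N) (F : StrongDual ℝ (StrongDual ℝ X)) (g : StrongDual ℝ J) :
    PsiL h F g = F (E1L h g) := rfl

lemma PsiL_T2 (h : LSumDecomp (annihilator' J) N) (G : StrongDual ℝ (StrongDual ℝ J)) :
    PsiL h (T2 h G) = G := by
  ext g
  rw [PsiL_apply, T2_apply, SL_E1L]

lemma PsiL_norm_le (h : LSumDecomp (annihilator' J) N) (F : StrongDual ℝ (StrongDual ℝ X)) :
    ‖PsiL h F‖ ≤ ‖F‖ := by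
  simpa using (PsiL h).le_of_opNorm_le (LinearMap.mkContinuous_norm_le _ zero_le_one _) F

lemma T2_norm (h : LSumDecomp (annihilator' J) N) (G : StrongDual ℝ (StrongDual ℝ J)) :
    ‖T2 h G‖ = ‖G‖ := by
  have hle : ‖T2 h G‖ ≤ ‖G‖ := by
    simpa using (T2 h).le_of_opNorm_le (LinearMap.mkContinuous_norm_le _ zero_le_one _) G
  refine le_antisymm hle ?_
  calc ‖G‖ = ‖PsiL h (T2 h G)‖ := by rw [PsiL_T2]
    _ ≤ ‖T2 h G‖ := PsiL_norm_le h _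

/-- The M-projection of the bidual of `X` onto the image of the bidual of `J`. -/
def P2 (h : LSumDecomp (annihilator' J) N) :
    StrongDual ℝ (StrongDual ℝ X) →L[ℝ] StrongDual ℝ (StrongDual ℝ X) := (T2 h).comp (PsiL h)

def Q2 (h : LSumDecomp (annihilator' J) N) :
    StrongDual ℝ (StrongDual ℝ X) →L[ℝ] StrongDual ℝ (StrongDual ℝ X) :=
  ContinuousLinearMap.id ℝ (StrongDual ℝ (StrongDual ℝ X)) - P2 h

lemma P2_apply (h : LSumDecomp (annihilator' J) N) (F : StrongDual ℝ (StrongDual ℝ X)) (f : StrongDual ℝ X) :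
    P2 h F f = F (piN h f) := by
  have : P2 h F f = F (E1 h (SL h f)) := rfl
  rw [this, E1_SL]

lemma Q2_apply (h : LSumDecomp (annihilator' J) N) (F : StrongDual ℝ (StrongDual ℝ X)) (f : StrongDual ℝ X) :
    Q2 h F f = F (piP h f) := by
  have h1 : Q2 h F f = F f - F (piN h f) := by
    rw [Q2]; simp [P2_apply]
  rw [h1, ← map_sub]
  congr 1
  have := pi_add h f
  linear_combination (norm := module) this.symm

end MIdeal3

lemma P2_def {X : Type*} [NormedAddCommGroup X] [NormedSpace ℝ X]
    {J : Submodule ℝ X} {N : Submodule ℝ (StrongDual ℝ X)}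
    (h : LSumDecomp (annihilator' J) N) : P2 h = (T2 h).comp (PsiL h) := rfl

lemma Q2_def {X : Type*} [NormedAddCommGroup X] [NormedSpace ℝ X]
    {J : Submodule ℝ X} {N : Submodule ℝ (StrongDual ℝ X)}
    (h : LSumDecomp (annihilator' J) N) :
    Q2 h = ContinuousLinearMap.id ℝ (StrongDual ℝ (StrongDual ℝ X)) - P2 h := rfl

attribute [irreducible] E1 E1L SL PsiL T2 P2 Q2 piN piP annihilator' 


section MIdeal4
variable {X : Type*} [NormedAddCommGroup X] [NormedSpace ℝ X]
  {J : Submodule ℝ X} {N : Submodule ℝ (StrongDual ℝ X)}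

lemma L_ineq (h : LSumDecomp (annihilator' J) N) (F : StrongDual ℝ (StrongDual ℝ (StrongDual ℝ X))) :
    ‖F.comp (P2 h)‖ + ‖F.comp (Q2 h)‖ ≤ ‖F‖ := by
  by_contra hcon
  push_neg at hcon
  set A := ‖F.comp (P2 h)‖
  set B := ‖F.comp (Q2 h)‖
  set ε := (A + B - ‖F‖) / 3 with hε
  have hεpos : 0 < ε := by simp only [hε]; linarith
  -- selection of almost-norming vectors with the right sign
  have hsel : ∀ C : StrongDual ℝ (StrongDual ℝ X) →L[ℝ] StrongDual ℝ (StrongDual ℝ X),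
      ∃ y : StrongDual ℝ (StrongDual ℝ X), ‖y‖ ≤ 1 ∧ ‖F.comp C‖ - ε < F (C y) := by
    intro C
    by_cases hr : ‖F.comp C‖ - ε < 0
    · exact ⟨0, by simp, by simpa using hr⟩
    push_neg at hr
    by_contra hno
    push_neg at hno
    have hb : ‖F.comp C‖ ≤ ‖F.comp C‖ - ε := by
      refine ContinuousLinearMap.opNorm_le_of_unit_norm hr fun y hy => ?_
      have h1 := hno y hy.le
      have h2 := hno (-y) (by rw [norm_neg]; exact hy.le)
      rw [map_neg, map_neg] at h2
      simp only [ContinuousLinearMap.comp_apply] at h1 h2 ⊢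
      rw [Real.norm_eq_abs, abs_le]
      constructor <;> linarith
    linarith
  obtain ⟨y₁, hy₁, hFy₁⟩ := hsel (P2 h)
  obtain ⟨y₂, hy₂, hFy₂⟩ := hsel (Q2 h)
  set G := P2 h y₁ + Q2 h y₂ with hG
  have hGnorm : ‖G‖ ≤ 1 := by
    refine ContinuousLinearMap.opNorm_le_bound _ zero_le_one fun f => ?_
    have e1 : G f = y₁ (piN h f) + y₂ (piP h f) := by
      rw [hG]; simp [P2_apply, Q2_apply]
    rw [e1]
    calc ‖y₁ (piN h f) + y₂ (piP h f)‖
        ≤ ‖y₁ (piN h f)‖ + ‖y₂ (piP h f)‖ := norm_add_le _ _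
      _ ≤ ‖y₁‖ * ‖piN h f‖ + ‖y₂‖ * ‖piP h f‖ :=
          add_le_add (y₁.le_opNorm _) (y₂.le_opNorm _)
      _ ≤ 1 * ‖piN h f‖ + 1 * ‖piP h f‖ :=
          add_le_add (mul_le_mul_of_nonneg_right hy₁ (norm_nonneg _))
            (mul_le_mul_of_nonneg_right hy₂ (norm_nonneg _))
      _ = ‖piP h f‖ + ‖piN h f‖ := by ring
      _ = ‖f‖ := (pi_norm h f).symm
      _ = 1 * ‖f‖ := (one_mul _).symm
  have hFG : F G = F (P2 h y₁) + F (Q2 h y₂) := by rw [hG, map_add]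
  have hFG_le : F G ≤ ‖F‖ := by
    calc F G ≤ ‖F G‖ := le_abs_self _
      _ ≤ ‖F‖ * ‖G‖ := F.le_opNorm G
      _ ≤ ‖F‖ * 1 := mul_le_mul_of_nonneg_left hGnorm (norm_nonneg F)
      _ = ‖F‖ := mul_one _
  rw [hFG] at hFG_le
  linarith

lemma hE3_case2 (h : LSumDecomp (annihilator' J) N)
    (F : StrongDual ℝ (StrongDual ℝ (StrongDual ℝ X))) (hF : ‖F‖ ≤ ‖F.comp (T2 h)‖) :
    F = (F.comp (T2 h)).comp (PsiL h) := by
  have hPT : ∀ G, P2 h (T2 h G) = T2 h G := by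
    intro G
    rw [P2_def]
    simp only [ContinuousLinearMap.comp_apply, PsiL_T2]
  have h1 : ‖F.comp (T2 h)‖ ≤ ‖F.comp (P2 h)‖ := by
    refine ContinuousLinearMap.opNorm_le_bound _ (norm_nonneg _) fun G => ?_
    calc ‖(F.comp (T2 h)) G‖ = ‖(F.comp (P2 h)) (T2 h G)‖ := by
          simp only [ContinuousLinearMap.comp_apply, hPT]
      _ ≤ ‖F.comp (P2 h)‖ * ‖T2 h G‖ := (F.comp (P2 h)).le_opNorm _
      _ = ‖F.comp (P2 h)‖ * ‖G‖ := by rw [T2_norm]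
  have h2 := L_ineq h F
  have h3 : ‖F.comp (Q2 h)‖ ≤ 0 := by linarith
  have h5 : ∀ F₂ : StrongDual ℝ (StrongDual ℝ X), F F₂ = F (P2 h F₂) := by
    intro F₂
    have hv : ‖(F.comp (Q2 h)) F₂‖ ≤ 0 := by
      have := (F.comp (Q2 h)).le_opNorm F₂
      nlinarith [norm_nonneg F₂]
    have hv0 : F (Q2 h F₂) = 0 := by simpa using hv
    have hQ : Q2 h F₂ = F₂ - P2 h F₂ := by
      rw [Q2_def]
      simp
    rw [hQ, map_sub] at hv0
    linarith
  ext F₂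
  have he : ((F.comp (T2 h)).comp (PsiL h)) F₂ = F (P2 h F₂) := by
    rw [P2_def]; rfl
  rw [he, ← h5]

lemma hE3_case1 (h : LSumDecomp (annihilator' J) N)
    (f : StrongDual ℝ X) (hf : ‖f‖ ≤ ‖f.comp J.subtypeL‖) :
    f = E1 h (f.comp J.subtypeL) := by
  have hg_le : ‖f.comp J.subtypeL‖ ≤ ‖piN h f‖ := by
    refine ContinuousLinearMap.opNorm_le_bound _ (norm_nonneg _) fun x => ?_
    calc ‖(f.comp J.subtypeL) x‖ = ‖piN h f x‖ := by
          rw [ContinuousLinearMap.comp_apply, piN_apply_coe h f x]; rfl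
      _ ≤ ‖piN h f‖ * ‖x‖ := (piN h f).le_opNorm x
  have hP0 : ‖piP h f‖ ≤ 0 := by
    have := pi_norm h f
    linarith
  have hP0' : piP h f = 0 := norm_le_zero_iff.mp hP0
  have hfN : f = piN h f := by
    have := pi_add h f
    rw [hP0', zero_add] at this
    exact this.symm
  refine E1_unique h (by rw [hfN]; exact piN_mem h f) fun x => ?_
  rfl

end MIdeal4


set_option maxHeartbeats 2000000 in
theorem frechet_smooth_of_very_smooth_in_M_ideal
    {X : Type*} [NormedAddCommGroup X] [NormedSpace ℝ X] [CompleteSpace X]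
    (hX : ∀ x : X, VerySmoothPoint X x → FrechetSmoothPoint X x)
    (J : Submodule ℝ X) (hJ : IsMIdeal J)
    (j : J) (hj : VerySmoothPoint J j) :
    FrechetSmoothPoint J j := by
  obtain ⟨hcl, N, hN⟩ := hJ
  -- `j` is a smooth point of `X`
  have hsm1 : SmoothPoint X ((j : X)) := by
    have := smooth_transfer J.subtypeL (fun z => rfl) (E1 hN)
      (fun g z => E1_apply hN g z) (E1_norm_le hN)
      (fun f hf => hE3_case1 hN f hf) hj.1
    exact this
  -- the canonical image of `j` is a smooth point of `X**`
  have hsm2 : SmoothPoint (StrongDual ℝ (StrongDual ℝ X)) (T2 hN (inclusionInDoubleDual ℝ J j)) :=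
    smooth_transfer (T2 hN) (T2_norm hN) (fun H => H.comp (PsiL hN))
      (fun H G => by rw [ContinuousLinearMap.comp_apply, PsiL_T2])
      (fun H => by
        refine ContinuousLinearMap.opNorm_le_bound _ (norm_nonneg _) fun F => ?_
        calc ‖(H.comp (PsiL hN)) F‖ = ‖H (PsiL hN F)‖ := rfl
          _ ≤ ‖H‖ * ‖PsiL hN F‖ := H.le_opNorm _
          _ ≤ ‖H‖ * ‖F‖ := mul_le_mul_of_nonneg_left (PsiL_norm_le hN F) (norm_nonneg H))
      (fun f hf => hE3_case2 hN f hf) hj.2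
  have hkey : T2 hN (inclusionInDoubleDual ℝ J j) = inclusionInDoubleDual ℝ X (j : X) := by
    ext f
    rw [T2_apply]
    calc (inclusionInDoubleDual ℝ J j) (SL hN f) = SL hN f j := rfl
      _ = piN hN f (j : X) := SL_apply hN f j
      _ = f (j : X) := piN_apply_coe hN f j
      _ = inclusionInDoubleDual ℝ X (j : X) f := rfl
  have hvs : VerySmoothPoint X (j : X) := ⟨hsm1, by rw [← hkey]; exact hsm2⟩
  obtain ⟨f, hf⟩ := hX _ hvs
  refine ⟨f.comp J.subtypeL, ?_⟩
  have hcoe : Tendsto (fun y : J => (y : X)) (𝓝[≠] (0 : J)) (𝓝[≠] (0 : X)) := by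
    rw [tendsto_nhdsWithin_iff]
    constructor
    · exact (continuous_subtype_val.tendsto (0 : J)).mono_left nhdsWithin_le_nhds
    · filter_upwards [self_mem_nhdsWithin] with y hy
      simp only [mem_compl_iff, mem_singleton_iff] at hy ⊢
      simpa [Submodule.coe_eq_zero] using hy
  exact hf.comp hcoe
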